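/- Let F be a filter on ℕ, Z = Z(F), and f : Z → Z a continuous bijection with f(∞) = ∞. Let X_∞ = lim← {Z; f} and let p ∈ X_∞ be the constant thread ∞. Then p is the only non-isolated point of X_∞, and the neighborhood filter of p is π_1^{-1}(⋃_k f^k(F)), i.e., generated by the sets π_1^{-1}(f^k(W)) for W ∈ F and k ∈ ℕ. -/

import Mathlib

open Topology


/-- The space `Z(F)` for a filter `F` on `ℕ`: points of `ℕ` isolated (`∞ = none`),
and the neighborhoods of `∞` given by the members of `F`. -/
def ZfilterTop (F : Filter ℕ) : TopologicalSpace (Option ℕ) :=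
  TopologicalSpace.generateFrom
    ({U | ∃ n : ℕ, U = {some n}} ∪ {U | ∃ A ∈ F, U = insert none (some '' A)})

theorem Zf_isOpen_basic (F : Filter ℕ) [t : TopologicalSpace (Option ℕ)]
    (ht : t = ZfilterTop F) {U : Set (Option ℕ)}
    (h : U ∈ ({U | ∃ n : ℕ, U = {some n}} ∪
      {U | ∃ A ∈ F, U = insert none (some '' A)} : Set (Set (Option ℕ)))) :
    IsOpen U := by
  subst ht
  exact TopologicalSpace.isOpen_generateFrom_of_mem h

theorem Zf_mem_nhds_none (F : Filter ℕ) [F.NeBot] [t : TopologicalSpace (Option ℕ)]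
    (ht : t = ZfilterTop F) (s : Set (Option ℕ)) :
    s ∈ nhds none ↔ ∃ A ∈ F, insert none (some '' A) ⊆ s := by
  subst ht
  rw [ZfilterTop, TopologicalSpace.nhds_generateFrom]
  rw [Filter.mem_biInf_of_directed]
  · constructor
    · rintro ⟨U, ⟨hnU, hU⟩, hUs⟩
      rcases hU with ⟨n, rfl⟩ | ⟨A, hA, rfl⟩
      · simp at hnU
      · exact ⟨A, hA, hUs⟩
    · rintro ⟨A, hA, hsub⟩
      exact ⟨insert none (some '' A), ⟨Set.mem_insert _ _, Or.inr ⟨A, hA, rfl⟩⟩, hsub⟩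
  · rintro U ⟨hnU, hU⟩ V ⟨hnV, hV⟩
    rcases hU with ⟨n, rfl⟩ | ⟨A, hA, rfl⟩
    · simp at hnU
    rcases hV with ⟨n, rfl⟩ | ⟨B, hB, rfl⟩
    · simp at hnV
    refine ⟨insert none (some '' (A ∩ B)),
      ⟨Set.mem_insert _ _, Or.inr ⟨A ∩ B, F.inter_mem hA hB, rfl⟩⟩, ?_, ?_⟩
    · exact Filter.principal_mono.2 (Set.insert_subset_insert
        (Set.image_mono Set.inter_subset_left))
    · exact Filter.principal_mono.2 (Set.insert_subset_insert
        (Set.image_mono Set.inter_subset_right))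
  · exact ⟨insert none (some '' Set.univ),
      Set.mem_insert _ _, Or.inr ⟨Set.univ, Filter.univ_mem, rfl⟩⟩

theorem Zf_pull (F : Filter ℕ) [F.NeBot] [t : TopologicalSpace (Option ℕ)]
    (ht : t = ZfilterTop F) (f : Option ℕ → Option ℕ)
    (hcont : Continuous f)
    (hinj : Function.Injective f) (hinf : f none = none) :
    ∀ (k : ℕ) (A : Set ℕ), A ∈ F → ∃ W ∈ F, f^[k] '' (some '' W) ⊆ some '' A := by
  have step : ∀ A ∈ F, ∃ B ∈ F, f '' (some '' B) ⊆ some '' A := by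
    intro A hA
    have h1 : insert none (some '' A) ∈ nhds (none : Option ℕ) :=
      (Zf_mem_nhds_none F ht _).2 ⟨A, hA, le_refl _⟩
    have h2 : f ⁻¹' (insert none (some '' A)) ∈ nhds (none : Option ℕ) := by
      have h3 : ContinuousAt f none := hcont.continuousAt
      rw [ContinuousAt, hinf] at h3
      exact h3 h1
    obtain ⟨B, hB, hBsub⟩ := (Zf_mem_nhds_none F ht _).1 h2
    refine ⟨B, hB, ?_⟩
    rintro z ⟨w, ⟨b, hb, rfl⟩, rfl⟩
    have : f (some b) ∈ insert none (some '' A) :=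
      hBsub (Set.mem_insert_of_mem _ ⟨b, hb, rfl⟩)
    rcases this with h | h
    · exact absurd (hinj (h.trans hinf.symm)) (by simp)
    · exact h
  intro k
  induction k with
  | zero => intro A hA; exact ⟨A, hA, by simp⟩
  | succ k ih =>
    intro A hA
    obtain ⟨W₁, hW₁, hW₁sub⟩ := ih A hA
    obtain ⟨W, hW, hWsub⟩ := step W₁ hW₁
    refine ⟨W, hW, ?_⟩
    rw [Function.iterate_succ, Set.image_comp]
    exact (Set.image_mono hWsub).trans hW₁sub
/-- Proposition 6.4: for a continuous bijection `f : Z(F) → Z(F)` fixing `∞`, the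
constant thread `p = ∞` is the only non-isolated point of `lim← {Z; f}`, and its
neighborhood filter is generated by the sets `π₁⁻¹(f^k(W))`, `W ∈ F`, `k ∈ ℕ`. -/
theorem stmt12 (F : Filter ℕ) [F.NeBot] (hfree : F ≤ Filter.cofinite)
    [t : TopologicalSpace (Option ℕ)] (ht : t = ZfilterTop F)
    (f : Option ℕ → Option ℕ) (hcont : Continuous f)
    (hbij : Function.Bijective f) (hinf : f none = none)
    (p : {x : ℕ → Option ℕ // ∀ n, x n = f (x (n + 1))})
    (hp : ∀ n, p.1 n = none) :
    (∀ x : {x : ℕ → Option ℕ // ∀ n, x n = f (x (n + 1))},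
        x ≠ p → IsOpen ({x} : Set {x : ℕ → Option ℕ // ∀ n, x n = f (x (n + 1))})) ∧
    ¬ IsOpen ({p} : Set {x : ℕ → Option ℕ // ∀ n, x n = f (x (n + 1))}) ∧
    (∀ S : Set {x : ℕ → Option ℕ // ∀ n, x n = f (x (n + 1))},
        S ∈ nhds p ↔ ∃ k : ℕ, ∃ W ∈ F,
          {x : {x : ℕ → Option ℕ // ∀ n, x n = f (x (n + 1))} |
            x.1 0 ∈ insert none (f^[k] '' (some '' W))} ⊆ S) := by
  have hfnone : ∀ z, f z = none ↔ z = none :=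
    fun z => ⟨fun h => hbij.injective (h.trans hinf.symm), fun h => h ▸ hinf⟩
  have hitnone : ∀ (k : ℕ) (z), f^[k] z = none ↔ z = none := by
    intro k
    induction k with
    | zero => simp
    | succ k ih => intro z; rw [Function.iterate_succ_apply, ih, hfnone]
  have hx0 : ∀ (x : {x : ℕ → Option ℕ // ∀ n, x n = f (x (n + 1))}) (n : ℕ),
      x.1 0 = f^[n] (x.1 n) := by
    intro x n
    induction n with
    | zero => rfl
    | succ n ih => rw [ih, x.2 n, ← Function.iterate_succ_apply]
  have hinj0 : ∀ x y : {x : ℕ → Option ℕ // ∀ n, x n = f (x (n + 1))},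
      x.1 0 = y.1 0 → x = y := by
    intro x y h
    apply Subtype.ext; funext n
    exact hbij.injective.iterate n ((hx0 x n).symm.trans (h.trans (hx0 y n)))
  -- characterization of the basic neighborhoods of p
  have hPmem : ∀ (k : ℕ) (W : Set ℕ), W ∈ F →
      {x : {x : ℕ → Option ℕ // ∀ n, x n = f (x (n + 1))} |
        x.1 0 ∈ insert none (f^[k] '' (some '' W))} ∈ nhds p := by
    intro k W hW
    have hEq : {x : {x : ℕ → Option ℕ // ∀ n, x n = f (x (n + 1))} |
          x.1 0 ∈ insert none (f^[k] '' (some '' W))}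
        = (fun x : {x : ℕ → Option ℕ // ∀ n, x n = f (x (n + 1))} => x.1 k)
            ⁻¹' (insert none (some '' W)) := by
      ext x
      simp only [Set.mem_setOf_eq, Set.mem_preimage, Set.mem_insert_iff]
      constructor
      · rintro (h0 | ⟨u, hu, hu0⟩)
        · exact Or.inl ((hitnone k _).1 ((hx0 x k).symm.trans h0))
        · refine Or.inr ?_
          have : f^[k] (x.1 k) = f^[k] u := (hx0 x k).symm.trans hu0.symm
          rwa [hbij.injective.iterate k this]
      · rintro (h0 | hu)
        · exact Or.inl ((hx0 x k).trans (by rw [h0]; exact (hitnone k none).2 rfl))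
        · exact Or.inr ⟨x.1 k, hu, (hx0 x k).symm⟩
    rw [hEq]
    have hopen : IsOpen (insert none (some '' W)) :=
      Zf_isOpen_basic F ht (Or.inr ⟨W, hW, rfl⟩)
    have hc : Continuous
        (fun x : {x : ℕ → Option ℕ // ∀ n, x n = f (x (n + 1))} => x.1 k) :=
      (continuous_apply k).comp continuous_subtype_val
    refine (hopen.preimage hc).mem_nhds ?_
    rw [Set.mem_preimage, hp k]
    exact Set.mem_insert _ _
  have part3 : ∀ S : Set {x : ℕ → Option ℕ // ∀ n, x n = f (x (n + 1))},
      S ∈ nhds p ↔ ∃ k : ℕ, ∃ W ∈ F,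
        {x : {x : ℕ → Option ℕ // ∀ n, x n = f (x (n + 1))} |
          x.1 0 ∈ insert none (f^[k] '' (some '' W))} ⊆ S := by
    intro S
    constructor
    · intro hS
      rw [show nhds p = Filter.comap Subtype.val (nhds p.1) from nhds_subtype_eq_comap, Filter.mem_comap] at hS
      obtain ⟨T, hT, hTsub⟩ := hS
      rw [nhds_pi, Filter.mem_pi] at hT
      obtain ⟨I, hIfin, u, hu, husub⟩ := hT
      have hu' : ∀ i, ∃ A ∈ F, insert none (some '' A) ⊆ u i := by
        intro i
        have := hu i
        rw [hp i] at this
        exact (Zf_mem_nhds_none F ht (u i)).1 this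
      choose A hA hAsub using hu'
      obtain ⟨k, hk⟩ := hIfin.bddAbove
      have hWi : ∀ i, ∃ Wi ∈ F, f^[k - i] '' (some '' Wi) ⊆ some '' (A i) :=
        fun i => Zf_pull F ht f hcont hbij.injective hinf (k - i) (A i) (hA i)
      choose Wi hWi1 hWi2 using hWi
      refine ⟨k, ⋂ i ∈ I, Wi i, (Filter.biInter_mem hIfin).2 fun i _ => hWi1 i, ?_⟩
      intro x hx
      apply hTsub
      apply husub
      intro i hi
      apply hAsub i
      rcases hx with h0 | ⟨u', ⟨w, hw, rfl⟩, hu0⟩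
      · left
        exact (hitnone i _).1 ((hx0 x i).symm.trans h0)
      · right
        have hik : i ≤ k := hk hi
        have h1 : f^[i] (x.1 i) = f^[i] (f^[k - i] (some w)) := by
          rw [← Function.iterate_add_apply, Nat.add_sub_cancel' hik]
          exact (hx0 x i).symm.trans hu0.symm
        have h2 : x.1 i = f^[k - i] (some w) := hbij.injective.iterate i h1
        rw [h2]
        apply hWi2 i
        exact ⟨some w, ⟨w, (Set.mem_iInter₂.1 hw) i hi, rfl⟩, rfl⟩
    · rintro ⟨k, W, hW, hsub⟩
      exact Filter.mem_of_superset (hPmem k W hW) hsub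
  refine ⟨?_, ?_, part3⟩
  · intro x hx
    have h0 : x.1 0 ≠ none := by
      intro h
      exact hx (hinj0 x p (h.trans (hp 0).symm))
    obtain ⟨m, hm⟩ := Option.ne_none_iff_exists'.mp h0
    have hEq : ({x} : Set {x : ℕ → Option ℕ // ∀ n, x n = f (x (n + 1))})
        = (fun y : {x : ℕ → Option ℕ // ∀ n, x n = f (x (n + 1))} => y.1 0)
            ⁻¹' {some m} := by
      ext y
      simp only [Set.mem_singleton_iff, Set.mem_preimage]
      constructor
      · rintro rfl; exact hm
      · intro h; exact hinj0 y x (h.trans hm.symm)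
    rw [hEq]
    exact (Zf_isOpen_basic F ht (Or.inl ⟨m, rfl⟩)).preimage
      ((continuous_apply 0).comp continuous_subtype_val)
  · intro hopen
    have hmem : ({p} : Set {x : ℕ → Option ℕ // ∀ n, x n = f (x (n + 1))}) ∈ nhds p :=
      hopen.mem_nhds rfl
    obtain ⟨k, W, hW, hsub⟩ := (part3 _).1 hmem
    obtain ⟨m, hm⟩ := Filter.nonempty_of_mem hW
    let e := Equiv.ofBijective f hbij
    have hthread : ∀ n : ℕ, (fun n => (e.symm)^[n] (f^[k] (some m))) n
        = f ((fun n => (e.symm)^[n] (f^[k] (some m))) (n + 1)) := by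
      intro n
      simp only [Function.iterate_succ_apply']
      exact (e.apply_symm_apply _).symm
    set x : {x : ℕ → Option ℕ // ∀ n, x n = f (x (n + 1))} :=
      ⟨fun n => (e.symm)^[n] (f^[k] (some m)), hthread⟩ with hxdef
    have hx : x ∈ {y : {x : ℕ → Option ℕ // ∀ n, x n = f (x (n + 1))} |
        y.1 0 ∈ insert none (f^[k] '' (some '' W))} :=
      Set.mem_insert_of_mem _ ⟨some m, ⟨m, hm, rfl⟩, rfl⟩
    have : x = p := hsub hx
    have h0 : x.1 0 = none := by rw [this, hp 0]
    have : f^[k] (some m) = none := h0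
    exact Option.some_ne_none m ((hitnone k _).1 this)
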